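/- Let r > 0 and n ≥ 1 be an integer. There exists a map 𝔖 from the n-fold cartesian power of M_{≤r} = {Z ∈ M : diam Z ≤ r} into B(5rn) = {Z ∈ M : diam Z = 5rn} such that for all tuples X = (X_1,…,X_n) and Y = (Y_1,…,Y_n) in (M_{≤r})^n one has d_GH(𝔖(X), 𝔖(Y)) = max_{1≤k≤n} d_GH(X_k, Y_k). In particular, (M_{≤r})^n equipped with the ℓ∞ (maximum) product distance embeds isometrically into B(5rn). -/

import Mathlib

open GromovHausdorff
open Metric Set

namespace LinftyAux

universe u

variable {T : Type u}

/-- Distance obtained by gluing blocks indexed by `b`, with intra-block distance `ℓ`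
and inter-block constant distances `c (max of the block indices)`. -/
def gd (b : T → ℕ) (ℓ : T → T → ℝ) (c : ℕ → ℝ) (z w : T) : ℝ :=
  if b z = b w then ℓ z w else c (max (b z) (b w))

structure GlueHyp (b : T → ℕ) (ℓ : T → T → ℝ) (c : ℕ → ℝ) : Prop where
  self : ∀ z, ℓ z z = 0
  comm : ∀ z w, b z = b w → ℓ z w = ℓ w z
  pos : ∀ z w, b z = b w → z ≠ w → 0 < ℓ z w
  tri : ∀ x y z, b x = b y → b y = b z → ℓ x z ≤ ℓ x y + ℓ y z
  bdd : ∀ z w, b z = b w → ℓ z w ≤ 2 * c (b z)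
  mono : Monotone c
  cpos : ∀ j, 0 < c j

theorem GlueHyp.nonneg {b : T → ℕ} {ℓ : T → T → ℝ} {c : ℕ → ℝ} (H : GlueHyp b ℓ c)
    {z w : T} (h : b z = b w) : 0 ≤ ℓ z w := by
  rcases eq_or_ne z w with rfl | hne
  · exact (H.self z).ge
  · exact (H.pos z w h hne).le

def glueMS (b : T → ℕ) (ℓ : T → T → ℝ) (c : ℕ → ℝ) (H : GlueHyp b ℓ c) : MetricSpace T where
  dist := gd b ℓ c
  dist_self z := by simp [gd, H.self]
  dist_comm z w := by
    show gd b ℓ c z w = gd b ℓ c w z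
    unfold gd
    rcases eq_or_ne (b z) (b w) with h | h
    · rw [if_pos h, if_pos h.symm, H.comm z w h]
    · rw [if_neg h, if_neg (Ne.symm h), max_comm]
  dist_triangle x y z := by
    show gd b ℓ c x z ≤ gd b ℓ c x y + gd b ℓ c y z
    unfold gd
    rcases eq_or_ne (b x) (b y) with hxy | hxy <;> rcases eq_or_ne (b y) (b z) with hyz | hyz
    · rw [if_pos (hxy.trans hyz), if_pos hxy, if_pos hyz]
      exact H.tri x y z hxy hyz
    · have hxz : b x ≠ b z := fun h => hyz (hxy ▸ h)
      rw [if_neg hxz, if_pos hxy, if_neg hyz, hxy]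
      have := H.nonneg hxy
      linarith
    · have hxz : b x ≠ b z := fun h => hxy (h ▸ hyz.symm)
      rw [if_neg hxz, if_pos hyz, if_neg hxy, ← hyz]
      have := H.nonneg hyz
      linarith
    · by_cases hxz : b x = b z
      · rw [if_pos hxz, if_neg hxy, if_neg hyz]
        have h1 := H.bdd x z hxz
        have h2 : c (b x) ≤ c (max (b x) (b y)) := H.mono (le_max_left _ _)
        have h3 : c (b x) ≤ c (max (b y) (b z)) := by
          rw [hxz]; exact H.mono (le_max_right _ _)
        linarith
      · rw [if_neg hxz, if_neg hxy, if_neg hyz]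
        have hm : max (b x) (b z) ≤ max (max (b x) (b y)) (max (b y) (b z)) := by omega
        calc c (max (b x) (b z)) ≤ c (max (max (b x) (b y)) (max (b y) (b z))) := H.mono hm
          _ = max (c (max (b x) (b y))) (c (max (b y) (b z))) := H.mono.map_max
          _ ≤ c (max (b x) (b y)) + c (max (b y) (b z)) := by
              have := (H.cpos (max (b x) (b y))).le
              have := (H.cpos (max (b y) (b z))).le
              rcases max_le_iff.1 (le_refl (max (c (max (b x) (b y))) (c (max (b y) (b z))))) with ⟨_, _⟩
              rcases le_total (c (max (b x) (b y))) (c (max (b y) (b z))) with h | h <;>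
                simp [max_eq_right, max_eq_left, h] <;> linarith
  eq_of_dist_eq_zero := by
    intro x y hd
    replace hd : gd b ℓ c x y = 0 := hd
    unfold gd at hd
    by_cases h : b x = b y
    · rw [if_pos h] at hd
      by_contra hne
      exact absurd hd (ne_of_gt (H.pos x y h hne))
    · rw [if_neg h] at hd
      exact absurd hd (ne_of_gt (H.cpos _))

theorem glueMS_dist {b : T → ℕ} {ℓ : T → T → ℝ} {c : ℕ → ℝ} (H : GlueHyp b ℓ c) (z w : T) :
    @dist T (glueMS b ℓ c H).toDist z w = gd b ℓ c z w := rfl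

/-- two-component disjoint sum, fresh type -/
inductive S2 (X : Type u) (Y : Type u) : Type u
  | L (x : X) : S2 X Y
  | R (y : Y) : S2 X Y

variable {X Y : Type u}

def s2b : S2 X Y → ℕ
  | .L _ => 0
  | .R _ => 1

def s2l [MetricSpace X] [MetricSpace Y] : S2 X Y → S2 X Y → ℝ
  | .L x, .L x' => dist x x'
  | .R y, .R y' => dist y y'
  | _, _ => 0

/-- Gromov-Hausdorff distance is at most half the max of the diameters. -/
theorem ghDist_le_half_max_diam (X Y : Type u) [MetricSpace X] [CompactSpace X] [Nonempty X]
    [MetricSpace Y] [CompactSpace Y] [Nonempty Y] :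
    ghDist X Y ≤ max (diam (univ : Set X)) (diam (univ : Set Y)) / 2 := by
  set M := max (diam (univ : Set X)) (diam (univ : Set Y)) with hMdef
  have hMX : diam (univ : Set X) ≤ M := le_max_left _ _
  have hMY : diam (univ : Set Y) ≤ M := le_max_right _ _
  have hM : 0 ≤ M := le_max_of_le_left diam_nonneg
  refine le_of_forall_pos_le_add fun ε hε => ?_
  have hbU : Bornology.IsBounded (univ : Set X) := isCompact_univ.isBounded
  have hbV : Bornology.IsBounded (univ : Set Y) := isCompact_univ.isBounded
  have H : GlueHyp (s2b : S2 X Y → ℕ) s2l (fun _ => M / 2 + ε) := by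
    constructor
    · rintro (x | y) <;> simp [s2l]
    · rintro (x | y) (x' | y') h <;> simp_all [s2l, s2b, dist_comm]
    · rintro (x | y) (x' | y') h hne
      · exact dist_pos.2 fun h' => hne (by rw [h'])
      · exact absurd h (by simp [s2b])
      · exact absurd h (by simp [s2b])
      · exact dist_pos.2 fun h' => hne (by rw [h'])
    · rintro (x | y) (x' | y') (x'' | y'') h1 h2 <;> simp_all [s2l, s2b] <;>
        exact dist_triangle _ _ _
    · rintro (x | y) (x' | y') h <;> simp_all [s2l, s2b]
      · linarith [dist_le_diam_of_mem hbU (mem_univ x) (mem_univ x'),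
          le_max_left (diam (univ : Set X)) (diam (univ : Set Y))]
      · linarith [dist_le_diam_of_mem hbV (mem_univ y) (mem_univ y'),
          le_max_right (diam (univ : Set X)) (diam (univ : Set Y))]
    · exact monotone_const
    · intro j; show (0:ℝ) < M / 2 + ε; linarith
  letI := glueMS s2b s2l (fun _ => M / 2 + ε) H
  have hL : Isometry (S2.L : X → S2 X Y) := Isometry.of_dist_eq fun a a' => by
    rw [glueMS_dist H]; simp [gd, s2b, s2l]
  have hR : Isometry (S2.R : Y → S2 X Y) := Isometry.of_dist_eq fun a a' => by
    rw [glueMS_dist H]; simp [gd, s2b, s2l]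
  have hcross : ∀ (x : X) (y : Y), dist (S2.L x : S2 X Y) (S2.R y) = M / 2 + ε := by
    intro x y
    rw [glueMS_dist H]; simp [gd, s2b, s2l]
  have hHD : hausdorffDist (range (S2.L : X → S2 X Y)) (range (S2.R : Y → S2 X Y)) ≤ M / 2 + ε := by
    apply hausdorffDist_le_of_infDist (by linarith)
    · rintro p ⟨x, rfl⟩
      obtain ⟨y⟩ := ‹Nonempty Y›
      exact (infDist_le_dist_of_mem (mem_range_self y)).trans (le_of_eq (hcross x y))
    · rintro p ⟨y, rfl⟩
      obtain ⟨x⟩ := ‹Nonempty X›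
      refine (infDist_le_dist_of_mem (mem_range_self x)).trans ?_
      rw [dist_comm]
      exact le_of_eq (hcross x y)
  exact (ghDist_le_hausdorffDist hL hR).trans hHD

/-- The combinatorial lemma about block permutations of a chain. -/
theorem arith_top (f : ℕ → ℕ) (M : ℕ) (hM : 2 ≤ M)
    (hprop : ∀ i ≤ M, ∀ j ≤ M, i ≠ j → f i ≠ f j ∧ max (f i) (f j) = max i j) :
    f M = M := by
  by_contra hfM
  have h01 := hprop 0 (by omega) 1 (by omega) (by omega)
  have hM0 := hprop M le_rfl 0 (by omega) (by omega)
  have hM1 := hprop M le_rfl 1 (by omega) (by omega)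
  have e0 : max (f M) (f 0) = M := by rw [hM0.2]; omega
  have e1 : max (f M) (f 1) = M := by rw [hM1.2]; omega
  have hf0 : f 0 = M := by
    have := le_max_left (f M) (f 0); have := le_max_right (f M) (f 0); omega
  have hf1 : f 1 = M := by
    have := le_max_left (f M) (f 1); have := le_max_right (f M) (f 1); omega
  exact h01.1 (hf0.trans hf1.symm)

theorem arith_main (N : ℕ) (hN : 2 ≤ N) (f : ℕ → ℕ)
    (hprop : ∀ i ≤ N, ∀ j ≤ N, i ≠ j → f i ≠ f j ∧ max (f i) (f j) = max i j) :
    (∀ i, 2 ≤ i → i ≤ N → f i = i) ∧ f 1 ≤ 1 := by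
  induction N, hN using Nat.le_induction with
  | base =>
    constructor
    · intro i h2 hle
      have : i = 2 := by omega
      subst this
      exact arith_top f 2 le_rfl hprop
    · have := (hprop 0 (by omega) 1 (by omega) (by omega)).2
      have := le_max_right (f 0) (f 1); omega
  | succ N hN2 ih =>
    have htop : f (N + 1) = N + 1 := arith_top f (N + 1) (by omega) hprop
    have hres := ih (fun i hi j hj hne => hprop i (by omega) j (by omega) hne)
    constructor
    · intro i h2 hle
      rcases eq_or_lt_of_le hle with rfl | hlt
      · exact htop
      · exact hres.1 i h2 (by omega)
    · exact hres.2


/-! ### The chain space: marker `p` (block 0), blocks `X k` (block `k+1`), marker `q` (block `n+1`) -/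

inductive ZT (n : ℕ) (G : Fin n → Type u) : Type u
  | p : ZT n G
  | q : ZT n G
  | x (k : Fin n) (v : G k) : ZT n G

variable {n : ℕ} {G : Fin n → Type u}

def zb : ZT n G → ℕ
  | .p => 0
  | .q => n + 1
  | .x k _ => k.val + 1

def zl [∀ k, MetricSpace (G k)] : ZT n G → ZT n G → ℝ
  | .x k v, .x l w => if h : l = k then dist v (h ▸ w) else 0
  | _, _ => 0

@[simp] theorem zl_xx_same [∀ k, MetricSpace (G k)] (k : Fin n) (v w : G k) :
    zl (ZT.x k v) (ZT.x k w) = dist v w := by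
  rw [zl, dif_pos rfl]

def zc (r : ℝ) (n : ℕ) (j : ℕ) : ℝ := r * (3 * n + 2 * j) - 2 * r

theorem zc_top (r : ℝ) (n : ℕ) : zc r n (n + 1) = 5 * r * n := by
  unfold zc; push_cast; ring

theorem zc_mono {r : ℝ} (hr : 0 < r) : Monotone (zc r n) := by
  intro a b hab
  unfold zc
  have : (a : ℝ) ≤ b := by exact_mod_cast hab
  nlinarith

theorem zc_pos {r : ℝ} (hr : 0 < r) (hn : 1 ≤ n) (j : ℕ) : 0 < zc r n j := by
  unfold zc
  have h1 : (1 : ℝ) ≤ n := by exact_mod_cast hn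
  have h2 : (0 : ℝ) ≤ j := Nat.cast_nonneg j
  nlinarith

theorem zc_ge {r : ℝ} (hr : 0 < r) (hn : 1 ≤ n) {j : ℕ} (hj : 1 ≤ j) :
    3 * r * n ≤ zc r n j := by
  unfold zc
  have h1 : (1 : ℝ) ≤ n := by exact_mod_cast hn
  have h2 : (1 : ℝ) ≤ j := by exact_mod_cast hj
  nlinarith

theorem zc_close {r : ℝ} (hr : 0 < r) {a b : ℕ} (h : |zc r n a - zc r n b| ≤ r) : a = b := by
  have he : zc r n a - zc r n b = 2 * r * ((a : ℝ) - b) := by unfold zc; ring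
  rw [he] at h
  by_contra hne
  rcases Nat.lt_or_ge a b with hl | hg
  · have : (a : ℝ) + 1 ≤ b := by exact_mod_cast hl
    rw [abs_le] at h
    nlinarith [h.1]
  · have hl : b < a := by omega
    have : (b : ℝ) + 1 ≤ a := by exact_mod_cast hl
    rw [abs_le] at h
    nlinarith [h.2]

theorem zb_le (z : ZT n G) : zb z ≤ n + 1 := by
  cases z with
  | p => simp [zb]
  | q => simp [zb]
  | x k v => simp only [zb]; have := k.isLt; omega

theorem zb_eq_zero {z : ZT n G} (h : zb z = 0) : z = ZT.p := by
  cases z with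
  | p => rfl
  | q => simp [zb] at h
  | x k v => simp [zb] at h

theorem zb_eq_top {z : ZT n G} (h : zb z = n + 1) : z = ZT.q := by
  cases z with
  | p => exfalso; simp only [zb] at h; omega
  | q => rfl
  | x k v => simp [zb] at h; have := k.isLt; omega

theorem zb_eq_x {z : ZT n G} {k : Fin n} (h : zb z = k.val + 1) : ∃ v, z = ZT.x k v := by
  cases z with
  | p => simp [zb] at h
  | q => exfalso; simp only [zb] at h; have := k.isLt; omega
  | x l v =>
    simp [zb] at h
    have : l = k := Fin.ext h
    subst this
    exact ⟨v, rfl⟩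

theorem zsame {z w : ZT n G} (h : zb z = zb w) :
    (z = ZT.p ∧ w = ZT.p) ∨ (z = ZT.q ∧ w = ZT.q) ∨
      ∃ (k : Fin n) (v v' : G k), z = ZT.x k v ∧ w = ZT.x k v' := by
  cases z with
  | p =>
    cases w with
    | p => exact Or.inl ⟨rfl, rfl⟩
    | q => exfalso; simp [zb] at h
    | x l w' => exfalso; simp [zb] at h
  | q =>
    cases w with
    | p => exfalso; simp [zb] at h
    | q => exact Or.inr (Or.inl ⟨rfl, rfl⟩)
    | x l w' => exfalso; simp [zb] at h; have := l.isLt; omega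
  | x k v =>
    cases w with
    | p => exfalso; simp [zb] at h
    | q => exfalso; simp only [zb] at h; have := k.isLt; omega
    | x l w' =>
      simp [zb] at h
      have : k = l := Fin.ext h
      subst this
      exact Or.inr (Or.inr ⟨k, v, w', rfl, rfl⟩)

section ZMS

variable [∀ k, MetricSpace (G k)] [∀ k, CompactSpace (G k)] {r : ℝ}

theorem zHyp (hr : 0 < r) (hn : 1 ≤ n)
    (hd : ∀ k, diam (univ : Set (G k)) ≤ r) :
    GlueHyp (zb : ZT n G → ℕ) zl (zc r n) := by
  have hb : ∀ (k : Fin n) (v w : G k), dist v w ≤ r := fun k v w =>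
    (dist_le_diam_of_mem isCompact_univ.isBounded (mem_univ v) (mem_univ w)).trans (hd k)
  have hrn : r ≤ 3 * r * n := by
    have h1 : (1 : ℝ) ≤ n := by exact_mod_cast hn
    nlinarith
  constructor
  · rintro (_ | _ | ⟨k, v⟩) <;> simp [zl]
  · intro z w h
    rcases zsame h with ⟨rfl, rfl⟩ | ⟨rfl, rfl⟩ | ⟨k, v, v', rfl, rfl⟩
    · rfl
    · rfl
    · simp [dist_comm]
  · intro z w h hne
    rcases zsame h with ⟨rfl, rfl⟩ | ⟨rfl, rfl⟩ | ⟨k, v, v', rfl, rfl⟩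
    · exact absurd rfl hne
    · exact absurd rfl hne
    · simp only [zl_xx_same]
      exact dist_pos.2 fun h' => hne (by rw [h'])
  · intro a b c h1 h2
    rcases zsame h1 with ⟨rfl, rfl⟩ | ⟨rfl, rfl⟩ | ⟨k, v, v', rfl, rfl⟩
    · rcases zsame h2 with ⟨-, rfl⟩ | ⟨he, -⟩ | ⟨l, w, w', he, -⟩
      · simp [zl]
      · exact absurd he (by simp)
      · exact absurd he (by simp)
    · rcases zsame h2 with ⟨he, -⟩ | ⟨-, rfl⟩ | ⟨l, w, w', he, -⟩
      · exact absurd he (by simp)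
      · simp [zl]
      · exact absurd he (by simp)
    · rcases zsame h2 with ⟨he, -⟩ | ⟨he, -⟩ | ⟨l, w, w', he, rfl⟩
      · exact absurd he (by simp)
      · exact absurd he (by simp)
      · cases he
        simp only [zl_xx_same]
        exact dist_triangle _ _ _
  · intro z w h
    rcases zsame h with ⟨rfl, rfl⟩ | ⟨rfl, rfl⟩ | ⟨k, v, v', rfl, rfl⟩
    · simp [zl]
      linarith [zc_pos hr hn (zb (ZT.p : ZT n G))]
    · simp [zl]
      linarith [zc_pos hr hn (zb (ZT.q : ZT n G))]
    · simp only [zl_xx_same]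
      have h1 := hb k v v'
      have h2 := zc_ge hr hn (j := k.val + 1) (by omega)
      show dist v v' ≤ 2 * zc r n (zb (ZT.x k v))
      simp only [zb]
      linarith
  · exact zc_mono hr
  · exact zc_pos hr hn

end ZMS
variable {n : ℕ} {G : Fin n → Type u}

instance : Nonempty (ZT n G) := ⟨ZT.p⟩

section ZMS2

variable [∀ k, MetricSpace (G k)] [∀ k, CompactSpace (G k)] {r : ℝ}

/-- metric space structure on the chain space -/
def zMS (hr : 0 < r) (hn : 1 ≤ n) (hd : ∀ k, diam (univ : Set (G k)) ≤ r) :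
    MetricSpace (ZT n G) :=
  glueMS zb zl (zc r n) (zHyp hr hn hd)

variable (hr : 0 < r) (hn : 1 ≤ n) (hd : ∀ k, diam (univ : Set (G k)) ≤ r)

theorem zdist_gd [M : MetricSpace (ZT n G)] (hM : M = zMS hr hn hd) (z w : ZT n G) :
    dist z w = gd zb zl (zc r n) z w := by
  subst hM; rfl

theorem zdist_xx [M : MetricSpace (ZT n G)] (hM : M = zMS hr hn hd) (k : Fin n) (v v' : G k) :
    dist (ZT.x k v) (ZT.x k v') = dist v v' := by
  rw [zdist_gd hr hn hd hM]
  simp [gd, zb, zl]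

theorem zx_isometry [M : MetricSpace (ZT n G)] (hM : M = zMS hr hn hd) (k : Fin n) :
    Isometry (fun v : G k => (ZT.x k v : ZT n G)) :=
  Isometry.of_dist_eq fun v w => zdist_xx hr hn hd hM k v w

theorem zdist_same [M : MetricSpace (ZT n G)] (hM : M = zMS hr hn hd) {z w : ZT n G}
    (h : zb z = zb w) : dist z w ≤ r := by
  have hb : ∀ (k : Fin n) (v w : G k), dist v w ≤ r := fun k v w =>
    (dist_le_diam_of_mem isCompact_univ.isBounded (mem_univ v) (mem_univ w)).trans (hd k)
  rw [zdist_gd hr hn hd hM, gd, if_pos h]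
  rcases zsame h with ⟨rfl, rfl⟩ | ⟨rfl, rfl⟩ | ⟨k, v, v', rfl, rfl⟩
  · simpa [zl] using hr.le
  · simpa [zl] using hr.le
  · simpa using hb k v v'

theorem zdist_diff [M : MetricSpace (ZT n G)] (hM : M = zMS hr hn hd) {z w : ZT n G}
    (h : zb z ≠ zb w) : dist z w = zc r n (max (zb z) (zb w)) := by
  rw [zdist_gd hr hn hd hM, gd, if_neg h]

theorem zcompact [M : MetricSpace (ZT n G)] (hM : M = zMS hr hn hd) :
    CompactSpace (ZT n G) := by
  have huniv : (univ : Set (ZT n G)) =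
      insert ZT.p (insert ZT.q (⋃ k, range (fun v : G k => (ZT.x k v : ZT n G)))) := by
    ext z
    cases z with
    | p => simp
    | q => simp
    | x k v => simp
  refine ⟨?_⟩
  rw [huniv]
  exact (((isCompact_iUnion fun k =>
    isCompact_range (zx_isometry hr hn hd hM k).continuous).insert _).insert _)

theorem zdiam [M : MetricSpace (ZT n G)] (hM : M = zMS hr hn hd) :
    diam (univ : Set (ZT n G)) = 5 * r * n := by
  have h1 : (1 : ℝ) ≤ n := by exact_mod_cast hn
  have h5 : (0:ℝ) ≤ 5 * r * n := by nlinarith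
  haveI := zcompact hr hn hd hM
  apply le_antisymm
  · apply diam_le_of_forall_dist_le h5
    intro z _ w _
    by_cases h : zb z = zb w
    · have := zdist_same hr hn hd hM h
      nlinarith
    · rw [zdist_diff hr hn hd hM h, ← zc_top r n]
      exact zc_mono hr (by have := zb_le z; have := zb_le w; omega)
  · have hzb : zb (ZT.p : ZT n G) ≠ zb (ZT.q : ZT n G) := by simp [zb]
    have := zdist_diff hr hn hd hM hzb
    rw [show max (zb (ZT.p : ZT n G)) (zb (ZT.q : ZT n G)) = n + 1 by simp [zb], zc_top] at this
    calc 5 * r * n = dist (ZT.p : ZT n G) ZT.q := this.symm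
      _ ≤ diam (univ : Set (ZT n G)) :=
        dist_le_diam_of_mem isCompact_univ.isBounded (mem_univ _) (mem_univ _)

/-- the point of the Gromov-Hausdorff space determined by the chain space -/
noncomputable def zGH : GHSpace :=
  letI := zMS hr hn hd
  haveI := zcompact hr hn hd rfl
  toGHSpace (ZT n G)

theorem zGH_diam : diam (univ : Set (zGH hr hn hd (G := G)).Rep) = 5 * r * n := by
  letI := zMS hr hn hd
  haveI := zcompact hr hn hd rfl
  have h1 : toGHSpace ((zGH hr hn hd (G := G)).Rep) = toGHSpace (ZT n G) := by
    rw [GHSpace.toGHSpace_rep]; rfl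
  obtain ⟨e⟩ := toGHSpace_eq_toGHSpace_iff_isometryEquiv.1 h1
  rw [e.diam_univ, zdiam hr hn hd rfl]

end ZMS2
variable {X Y : Type u}

section Partner

variable [MetricSpace X] [CompactSpace X] [Nonempty X] [MetricSpace Y] [CompactSpace Y] [Nonempty Y]

theorem exists_partner (x : X) :
    ∃ y : Y, dist (optimalGHInjl X Y x) (optimalGHInjr X Y y) ≤ ghDist X Y := by
  have hfin : EMetric.hausdorffEdist (range (optimalGHInjl X Y)) (range (optimalGHInjr X Y)) ≠ ⊤ :=
    hausdorffEdist_ne_top_of_nonempty_of_bounded (range_nonempty _) (range_nonempty _)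
      (isCompact_range (isometry_optimalGHInjl X Y).continuous).isBounded
      (isCompact_range (isometry_optimalGHInjr X Y).continuous).isBounded
  have h1 : infDist (optimalGHInjl X Y x) (range (optimalGHInjr X Y)) ≤ ghDist X Y := by
    rw [← hausdorffDist_optimal (X := X) (Y := Y)]
    exact infDist_le_hausdorffDist_of_mem (mem_range_self x) hfin
  obtain ⟨w, ⟨y, rfl⟩, hw⟩ :=
    (isCompact_range (isometry_optimalGHInjr X Y).continuous).exists_infDist_eq_dist
      (range_nonempty _) (optimalGHInjl X Y x)
  exact ⟨y, by rw [← hw]; exact h1⟩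

theorem exists_partner' (y : Y) :
    ∃ x : X, dist (optimalGHInjl X Y x) (optimalGHInjr X Y y) ≤ ghDist X Y := by
  have hfin : EMetric.hausdorffEdist (range (optimalGHInjr X Y)) (range (optimalGHInjl X Y)) ≠ ⊤ :=
    hausdorffEdist_ne_top_of_nonempty_of_bounded (range_nonempty _) (range_nonempty _)
      (isCompact_range (isometry_optimalGHInjr X Y).continuous).isBounded
      (isCompact_range (isometry_optimalGHInjl X Y).continuous).isBounded
  have h1 : infDist (optimalGHInjr X Y y) (range (optimalGHInjl X Y)) ≤ ghDist X Y := by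
    rw [← hausdorffDist_optimal (X := X) (Y := Y), hausdorffDist_comm]
    exact infDist_le_hausdorffDist_of_mem (mem_range_self y) hfin
  obtain ⟨w, ⟨x, rfl⟩, hw⟩ :=
    (isCompact_range (isometry_optimalGHInjl X Y).continuous).exists_infDist_eq_dist
      (range_nonempty _) (optimalGHInjr X Y y)
  exact ⟨x, by rw [dist_comm, ← hw]; exact h1⟩

theorem ghDist_le_r {r : ℝ} (hr : 0 ≤ r) (hX : diam (univ : Set X) ≤ r)
    (hY : diam (univ : Set Y) ≤ r) : ghDist X Y ≤ r / 2 := by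
  have := ghDist_le_half_max_diam X Y
  have hm : max (diam (univ : Set X)) (diam (univ : Set Y)) ≤ r := max_le hX hY
  linarith

end Partner

section Upper

variable {n : ℕ} {G H : Fin n → Type u}

/-- same-block shapes across two chain spaces -/
theorem zsame2 {z : ZT n G} {w : ZT n H} (h : zb z = zb w) :
    (z = ZT.p ∧ w = ZT.p) ∨ (z = ZT.q ∧ w = ZT.q) ∨
      ∃ (k : Fin n) (v : G k) (v' : H k), z = ZT.x k v ∧ w = ZT.x k v' := by
  cases z with
  | p =>
    cases w with
    | p => exact Or.inl ⟨rfl, rfl⟩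
    | q => exfalso; simp [zb] at h
    | x l w' => exfalso; simp [zb] at h
  | q =>
    cases w with
    | p => exfalso; simp [zb] at h
    | q => exact Or.inr (Or.inl ⟨rfl, rfl⟩)
    | x l w' => exfalso; simp only [zb] at h; have := l.isLt; omega
  | x k v =>
    cases w with
    | p => exfalso; simp [zb] at h
    | q => exfalso; simp only [zb] at h; have := k.isLt; omega
    | x l w' =>
      simp only [zb, Nat.add_right_cancel_iff] at h
      have : k = l := Fin.ext h
      subst this
      exact Or.inr (Or.inr ⟨k, v, w', rfl, rfl⟩)

variable [∀ k, MetricSpace (G k)] [∀ k, CompactSpace (G k)] [∀ k, Nonempty (G k)]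
variable [∀ k, MetricSpace (H k)] [∀ k, CompactSpace (H k)] [∀ k, Nonempty (H k)]

/-- block index on the disjoint sum of the two chain spaces -/
def cb : S2 (ZT n G) (ZT n H) → ℕ
  | .L z => zb z
  | .R w => zb w

/-- cross distance between same blocks of the two chains, via the optimal coupling -/
noncomputable def cbase : ZT n G → ZT n H → ℝ
  | .x k v, .x l w =>
    if h : l = k then dist (optimalGHInjl (G k) (H k) v) (optimalGHInjr (G k) (H k) (h ▸ w))
    else 0
  | _, _ => 0

@[simp] theorem cbase_xx_same (k : Fin n) (v : G k) (w : H k) :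
    cbase (ZT.x k v) (ZT.x k w) = dist (optimalGHInjl (G k) (H k) v) (optimalGHInjr (G k) (H k) w) := by
  rw [cbase, dif_pos rfl]

theorem cbase_nonneg (z : ZT n G) (w : ZT n H) : 0 ≤ cbase z w := by
  cases z with
  | p => simp [cbase]
  | q => simp [cbase]
  | x k v =>
    cases w with
    | p => simp [cbase]
    | q => simp [cbase]
    | x l w' =>
      rw [cbase]
      split
      · exact dist_nonneg
      · exact le_refl 0

/-- intra-block distance on the coupled space -/
noncomputable def cl (ε : ℝ) : S2 (ZT n G) (ZT n H) → S2 (ZT n G) (ZT n H) → ℝ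
  | .L z, .L z' => zl z z'
  | .R w, .R w' => zl w w'
  | .L z, .R w => cbase z w + ε
  | .R w, .L z => cbase z w + ε

variable {r : ℝ}

theorem cbase_le (hr : 0 < r) (hdG : ∀ k, diam (univ : Set (G k)) ≤ r)
    (hdH : ∀ k, diam (univ : Set (H k)) ≤ r) (z : ZT n G) (w : ZT n H) :
    cbase z w ≤ 3 / 2 * r := by
  have h32 : (0:ℝ) ≤ 3 / 2 * r := by linarith
  cases z with
  | p => simpa [cbase] using h32
  | q => simpa [cbase] using h32
  | x k v =>
    cases w with
    | p => simpa [cbase] using h32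
    | q => simpa [cbase] using h32
    | x l w' =>
      rw [cbase]
      split
      · rename_i hlk
        subst hlk
        obtain ⟨w0, hw0⟩ := exists_partner (X := G l) (Y := H l) v
        have h2 : ghDist (G l) (H l) ≤ r / 2 := ghDist_le_r hr.le (hdG l) (hdH l)
        have h3 : dist (optimalGHInjr (G l) (H l) w0) (optimalGHInjr (G l) (H l) w') =
            dist w0 w' := (isometry_optimalGHInjr (G l) (H l)).dist_eq w0 w'
        have h4 : dist w0 w' ≤ r :=
          (dist_le_diam_of_mem isCompact_univ.isBounded (mem_univ _) (mem_univ _)).trans (hdH l)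
        have h5 := dist_triangle (optimalGHInjl (G l) (H l) v)
          (optimalGHInjr (G l) (H l) w0) (optimalGHInjr (G l) (H l) w')
        linarith
      · exact h32

theorem cHyp (hr : 0 < r) (hn : 1 ≤ n) (hdG : ∀ k, diam (univ : Set (G k)) ≤ r)
    (hdH : ∀ k, diam (univ : Set (H k)) ≤ r) {ε : ℝ} (hε : 0 < ε) (hε2 : ε ≤ r / 2) :
    GlueHyp (cb : S2 (ZT n G) (ZT n H) → ℕ) (cl ε) (zc r n) := by
  have hZG := zHyp (G := G) hr hn hdG
  have hZH := zHyp (G := H) hr hn hdH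
  have hzc_ge_r : ∀ j : ℕ, r ≤ zc r n j := by
    intro j
    unfold zc
    have h1 : (1 : ℝ) ≤ n := by exact_mod_cast hn
    have h2 : (0 : ℝ) ≤ j := Nat.cast_nonneg j
    nlinarith
  constructor
  · rintro (z | w)
    · exact hZG.self z
    · exact hZH.self w
  · rintro (z | w) (z' | w') h
    · exact hZG.comm _ _ h
    · rfl
    · rfl
    · exact hZH.comm _ _ h
  · rintro (z | w) (z' | w') h hne
    · exact hZG.pos _ _ h fun h' => hne (by rw [h'])
    · have := cbase_nonneg z w'; show (0:ℝ) < cbase z w' + ε; linarith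
    · have := cbase_nonneg z' w; show (0:ℝ) < cbase z' w + ε; linarith
    · exact hZH.pos _ _ h fun h' => hne (by rw [h'])
  · intro a b c h1 h2
    have hIl : ∀ (k : Fin n) (u u' : G k),
        dist (optimalGHInjl (G k) (H k) u) (optimalGHInjl (G k) (H k) u') = dist u u' :=
      fun k u u' => (isometry_optimalGHInjl (G k) (H k)).dist_eq u u'
    have hIr : ∀ (k : Fin n) (u u' : H k),
        dist (optimalGHInjr (G k) (H k) u) (optimalGHInjr (G k) (H k) u') = dist u u' :=
      fun k u u' => (isometry_optimalGHInjr (G k) (H k)).dist_eq u u'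
    rcases a with z1 | w1 <;> rcases b with z2 | w2 <;> rcases c with z3 | w3 <;>
      simp only [cb] at h1 h2
    · -- LLL
      rcases zsame h1 with ⟨rfl, rfl⟩ | ⟨rfl, rfl⟩ | ⟨k, v1, v2, rfl, rfl⟩
      · rcases zsame h2 with ⟨-, rfl⟩ | ⟨he, -⟩ | ⟨l, w, w', he, -⟩
        · simp [cl, zl]
        · exact absurd he (by simp)
        · exact absurd he (by simp)
      · rcases zsame h2 with ⟨he, -⟩ | ⟨-, rfl⟩ | ⟨l, w, w', he, -⟩
        · exact absurd he (by simp)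
        · simp [cl, zl]
        · exact absurd he (by simp)
      · rcases zsame h2 with ⟨he, -⟩ | ⟨he, -⟩ | ⟨l, w, v3, he, rfl⟩
        · exact absurd he (by simp)
        · exact absurd he (by simp)
        · cases he
          show zl (ZT.x k v1) (ZT.x k v3) ≤ zl (ZT.x k v1) (ZT.x k v2) + zl (ZT.x k v2) (ZT.x k v3)
          simp only [zl_xx_same]
          exact dist_triangle _ _ _
    · -- LLR
      rcases zsame h1 with ⟨rfl, rfl⟩ | ⟨rfl, rfl⟩ | ⟨k, v1, v2, rfl, rfl⟩
      · rcases zsame2 h2 with ⟨-, rfl⟩ | ⟨he, -⟩ | ⟨l, w, w', he, -⟩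
        · show cbase ZT.p ZT.p + ε ≤ zl (ZT.p : ZT n G) ZT.p + (cbase ZT.p ZT.p + ε)
          simp [cbase, zl]
        · exact absurd he (by simp)
        · exact absurd he (by simp)
      · rcases zsame2 h2 with ⟨he, -⟩ | ⟨-, rfl⟩ | ⟨l, w, w', he, -⟩
        · exact absurd he (by simp)
        · show cbase ZT.q ZT.q + ε ≤ zl (ZT.q : ZT n G) ZT.q + (cbase ZT.q ZT.q + ε)
          simp [cbase, zl]
        · exact absurd he (by simp)
      · rcases zsame2 h2 with ⟨he, -⟩ | ⟨he, -⟩ | ⟨l, w, w3, he, rfl⟩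
        · exact absurd he (by simp)
        · exact absurd he (by simp)
        · cases he
          show cbase (ZT.x k v1) (ZT.x k w3) + ε ≤
            zl (ZT.x k v1) (ZT.x k v2) + (cbase (ZT.x k v2) (ZT.x k w3) + ε)
          simp only [cbase_xx_same, zl_xx_same]
          rw [← hIl k v1 v2]
          linarith [dist_triangle (optimalGHInjl (G k) (H k) v1) (optimalGHInjl (G k) (H k) v2)
            (optimalGHInjr (G k) (H k) w3)]
    · -- LRL
      rcases zsame2 h1 with ⟨rfl, rfl⟩ | ⟨rfl, rfl⟩ | ⟨k, v1, w2, rfl, rfl⟩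
      · rcases zsame2 (G := H) (H := G) h2 with ⟨-, rfl⟩ | ⟨he, -⟩ | ⟨l, w, w', he, -⟩
        · show zl (ZT.p : ZT n G) ZT.p ≤ (cbase ZT.p ZT.p + ε) + (cbase ZT.p ZT.p + ε)
          simp [cbase, zl]; linarith
        · exact absurd he (by simp)
        · exact absurd he (by simp)
      · rcases zsame2 (G := H) (H := G) h2 with ⟨he, -⟩ | ⟨-, rfl⟩ | ⟨l, w, w', he, -⟩
        · exact absurd he (by simp)
        · show zl (ZT.q : ZT n G) ZT.q ≤ (cbase ZT.q ZT.q + ε) + (cbase ZT.q ZT.q + ε)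
          simp [cbase, zl]; linarith
        · exact absurd he (by simp)
      · rcases zsame2 (G := H) (H := G) h2 with ⟨he, -⟩ | ⟨he, -⟩ | ⟨l, w, v3, he, rfl⟩
        · exact absurd he (by simp)
        · exact absurd he (by simp)
        · cases he
          show zl (ZT.x k v1) (ZT.x k v3) ≤
            (cbase (ZT.x k v1) (ZT.x k w2) + ε) + (cbase (ZT.x k v3) (ZT.x k w2) + ε)
          simp only [cbase_xx_same, zl_xx_same]
          rw [← hIl k v1 v3]
          linarith [dist_triangle (optimalGHInjl (G k) (H k) v1) (optimalGHInjr (G k) (H k) w2)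
            (optimalGHInjl (G k) (H k) v3),
            dist_comm (optimalGHInjr (G k) (H k) w2) (optimalGHInjl (G k) (H k) v3), hε.le]
    · -- LRR
      rcases zsame2 h1 with ⟨rfl, rfl⟩ | ⟨rfl, rfl⟩ | ⟨k, v1, w2, rfl, rfl⟩
      · rcases zsame (G := H) h2 with ⟨-, rfl⟩ | ⟨he, -⟩ | ⟨l, w, w', he, -⟩
        · show cbase ZT.p ZT.p + ε ≤ (cbase ZT.p ZT.p + ε) + zl (ZT.p : ZT n H) ZT.p
          simp [cbase, zl]
        · exact absurd he (by simp)
        · exact absurd he (by simp)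
      · rcases zsame (G := H) h2 with ⟨he, -⟩ | ⟨-, rfl⟩ | ⟨l, w, w', he, -⟩
        · exact absurd he (by simp)
        · show cbase ZT.q ZT.q + ε ≤ (cbase ZT.q ZT.q + ε) + zl (ZT.q : ZT n H) ZT.q
          simp [cbase, zl]
        · exact absurd he (by simp)
      · rcases zsame (G := H) h2 with ⟨he, -⟩ | ⟨he, -⟩ | ⟨l, w, w3, he, rfl⟩
        · exact absurd he (by simp)
        · exact absurd he (by simp)
        · cases he
          show cbase (ZT.x k v1) (ZT.x k w3) + ε ≤
            (cbase (ZT.x k v1) (ZT.x k w2) + ε) + zl (ZT.x k w2) (ZT.x k w3)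
          simp only [cbase_xx_same, zl_xx_same]
          rw [← hIr k w2 w3]
          linarith [dist_triangle (optimalGHInjl (G k) (H k) v1) (optimalGHInjr (G k) (H k) w2)
            (optimalGHInjr (G k) (H k) w3)]
    · -- RLL
      rcases zsame2 (G := H) (H := G) h1 with ⟨rfl, rfl⟩ | ⟨rfl, rfl⟩ | ⟨k, w1, v2, rfl, rfl⟩
      · rcases zsame h2 with ⟨-, rfl⟩ | ⟨he, -⟩ | ⟨l, w, w', he, -⟩
        · show cbase ZT.p ZT.p + ε ≤ (cbase ZT.p ZT.p + ε) + zl (ZT.p : ZT n G) ZT.p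
          simp [cbase, zl]
        · exact absurd he (by simp)
        · exact absurd he (by simp)
      · rcases zsame h2 with ⟨he, -⟩ | ⟨-, rfl⟩ | ⟨l, w, w', he, -⟩
        · exact absurd he (by simp)
        · show cbase ZT.q ZT.q + ε ≤ (cbase ZT.q ZT.q + ε) + zl (ZT.q : ZT n G) ZT.q
          simp [cbase, zl]
        · exact absurd he (by simp)
      · rcases zsame h2 with ⟨he, -⟩ | ⟨he, -⟩ | ⟨l, w, v3, he, rfl⟩
        · exact absurd he (by simp)
        · exact absurd he (by simp)
        · cases he
          show cbase (ZT.x k v3) (ZT.x k w1) + ε ≤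
            (cbase (ZT.x k v2) (ZT.x k w1) + ε) + zl (ZT.x k v2) (ZT.x k v3)
          simp only [cbase_xx_same, zl_xx_same]
          rw [← hIl k v2 v3]
          linarith [dist_triangle (optimalGHInjl (G k) (H k) v3) (optimalGHInjl (G k) (H k) v2)
            (optimalGHInjr (G k) (H k) w1),
            dist_comm (optimalGHInjl (G k) (H k) v3) (optimalGHInjl (G k) (H k) v2)]
    · -- RLR
      rcases zsame2 (G := H) (H := G) h1 with ⟨rfl, rfl⟩ | ⟨rfl, rfl⟩ | ⟨k, w1, v2, rfl, rfl⟩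
      · rcases zsame2 h2 with ⟨-, rfl⟩ | ⟨he, -⟩ | ⟨l, w, w', he, -⟩
        · show zl (ZT.p : ZT n H) ZT.p ≤ (cbase ZT.p ZT.p + ε) + (cbase ZT.p ZT.p + ε)
          simp [cbase, zl]; linarith
        · exact absurd he (by simp)
        · exact absurd he (by simp)
      · rcases zsame2 h2 with ⟨he, -⟩ | ⟨-, rfl⟩ | ⟨l, w, w', he, -⟩
        · exact absurd he (by simp)
        · show zl (ZT.q : ZT n H) ZT.q ≤ (cbase ZT.q ZT.q + ε) + (cbase ZT.q ZT.q + ε)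
          simp [cbase, zl]; linarith
        · exact absurd he (by simp)
      · rcases zsame2 h2 with ⟨he, -⟩ | ⟨he, -⟩ | ⟨l, w, w3, he, rfl⟩
        · exact absurd he (by simp)
        · exact absurd he (by simp)
        · cases he
          show zl (ZT.x k w1) (ZT.x k w3) ≤
            (cbase (ZT.x k v2) (ZT.x k w1) + ε) + (cbase (ZT.x k v2) (ZT.x k w3) + ε)
          simp only [cbase_xx_same, zl_xx_same]
          rw [← hIr k w1 w3]
          linarith [dist_triangle (optimalGHInjr (G k) (H k) w1) (optimalGHInjl (G k) (H k) v2)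
            (optimalGHInjr (G k) (H k) w3),
            dist_comm (optimalGHInjr (G k) (H k) w1) (optimalGHInjl (G k) (H k) v2), hε.le]
    · -- RRL
      rcases zsame (G := H) h1 with ⟨rfl, rfl⟩ | ⟨rfl, rfl⟩ | ⟨k, w1, w2, rfl, rfl⟩
      · rcases zsame2 (G := H) (H := G) h2 with ⟨-, rfl⟩ | ⟨he, -⟩ | ⟨l, w, w', he, -⟩
        · show cbase ZT.p ZT.p + ε ≤ zl (ZT.p : ZT n H) ZT.p + (cbase ZT.p ZT.p + ε)
          simp [cbase, zl]
        · exact absurd he (by simp)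
        · exact absurd he (by simp)
      · rcases zsame2 (G := H) (H := G) h2 with ⟨he, -⟩ | ⟨-, rfl⟩ | ⟨l, w, w', he, -⟩
        · exact absurd he (by simp)
        · show cbase ZT.q ZT.q + ε ≤ zl (ZT.q : ZT n H) ZT.q + (cbase ZT.q ZT.q + ε)
          simp [cbase, zl]
        · exact absurd he (by simp)
      · rcases zsame2 (G := H) (H := G) h2 with ⟨he, -⟩ | ⟨he, -⟩ | ⟨l, w, v3, he, rfl⟩
        · exact absurd he (by simp)
        · exact absurd he (by simp)
        · cases he
          show cbase (ZT.x k v3) (ZT.x k w1) + ε ≤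
            zl (ZT.x k w1) (ZT.x k w2) + (cbase (ZT.x k v3) (ZT.x k w2) + ε)
          simp only [cbase_xx_same, zl_xx_same]
          rw [← hIr k w1 w2]
          linarith [dist_triangle (optimalGHInjl (G k) (H k) v3) (optimalGHInjr (G k) (H k) w2)
            (optimalGHInjr (G k) (H k) w1),
            dist_comm (optimalGHInjr (G k) (H k) w2) (optimalGHInjr (G k) (H k) w1)]
    · -- RRR
      rcases zsame (G := H) h1 with ⟨rfl, rfl⟩ | ⟨rfl, rfl⟩ | ⟨k, w1, w2, rfl, rfl⟩
      · rcases zsame (G := H) h2 with ⟨-, rfl⟩ | ⟨he, -⟩ | ⟨l, w, w', he, -⟩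
        · simp [cl, zl]
        · exact absurd he (by simp)
        · exact absurd he (by simp)
      · rcases zsame (G := H) h2 with ⟨he, -⟩ | ⟨-, rfl⟩ | ⟨l, w, w', he, -⟩
        · exact absurd he (by simp)
        · simp [cl, zl]
        · exact absurd he (by simp)
      · rcases zsame (G := H) h2 with ⟨he, -⟩ | ⟨he, -⟩ | ⟨l, w, w3, he, rfl⟩
        · exact absurd he (by simp)
        · exact absurd he (by simp)
        · cases he
          show zl (ZT.x k w1) (ZT.x k w3) ≤ zl (ZT.x k w1) (ZT.x k w2) + zl (ZT.x k w2) (ZT.x k w3)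
          simp only [zl_xx_same]
          exact dist_triangle _ _ _
  · rintro (z | w) (z' | w') h
    · exact hZG.bdd _ _ h
    · show cbase z w' + ε ≤ 2 * zc r n (cb (S2.L z))
      have := cbase_le hr hdG hdH z w'
      have := hzc_ge_r (cb (S2.L z : S2 (ZT n G) (ZT n H)))
      linarith
    · show cbase z' w + ε ≤ 2 * zc r n (cb (S2.R w))
      have := cbase_le hr hdG hdH z' w
      have := hzc_ge_r (cb (S2.R w : S2 (ZT n G) (ZT n H)))
      linarith
    · exact hZH.bdd _ _ h
  · exact zc_mono hr
  · exact zc_pos hr hn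

theorem zGH_dist_le (hr : 0 < r) (hn : 1 ≤ n) (hdG : ∀ k, diam (univ : Set (G k)) ≤ r)
    (hdH : ∀ k, diam (univ : Set (H k)) ≤ r) :
    dist (zGH hr hn hdG) (zGH hr hn hdH) ≤ ⨆ k : Fin n, ghDist (G k) (H k) := by
  haveI : Nonempty (Fin n) := ⟨⟨0, hn⟩⟩
  set D := ⨆ k : Fin n, ghDist (G k) (H k) with hD
  have hbdd : BddAbove (range fun k : Fin n => ghDist (G k) (H k)) :=
    (Set.finite_range _).bddAbove
  have hD0 : 0 ≤ D := by
    refine le_trans ?_ (le_ciSup hbdd ⟨0, hn⟩)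
    exact dist_nonneg
  refine le_of_forall_pos_le_add fun ε0 hε0 => ?_
  set ε := min ε0 (r / 2) with hεdef
  have hεpos : 0 < ε := lt_min hε0 (by linarith)
  have hεr : ε ≤ r / 2 := min_le_right _ _
  have hεε0 : ε ≤ ε0 := min_le_left _ _
  letI M1 := zMS (G := G) hr hn hdG
  letI M2 := zMS (G := H) hr hn hdH
  haveI := zcompact (G := G) hr hn hdG rfl
  haveI := zcompact (G := H) hr hn hdH rfl
  have hyp := cHyp hr hn hdG hdH hεpos hεr
  letI MC := glueMS cb (cl ε) (zc r n) hyp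
  have hisoL : Isometry (S2.L : ZT n G → S2 (ZT n G) (ZT n H)) :=
    Isometry.of_dist_eq fun z z' => by
      rw [glueMS_dist hyp, zdist_gd hr hn hdG rfl]
      simp only [gd, cb, cl]
      rfl
  have hisoR : Isometry (S2.R : ZT n H → S2 (ZT n G) (ZT n H)) :=
    Isometry.of_dist_eq fun w w' => by
      rw [glueMS_dist hyp, zdist_gd hr hn hdH rfl]
      simp only [gd, cb, cl]
      rfl
  have key : hausdorffDist (range (S2.L : ZT n G → S2 (ZT n G) (ZT n H)))
      (range (S2.R : ZT n H → S2 (ZT n G) (ZT n H))) ≤ D + ε := by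
    apply hausdorffDist_le_of_infDist (by linarith)
    · rintro u ⟨z, rfl⟩
      cases z with
      | p =>
        refine (infDist_le_dist_of_mem (mem_range_self (ZT.p : ZT n H))).trans ?_
        have h1 : dist (S2.L (ZT.p : ZT n G)) (S2.R (ZT.p : ZT n H)) = ε := by
          rw [glueMS_dist hyp]
          simp [gd, cb, cl, cbase, zb]
        rw [h1]; linarith
      | q =>
        refine (infDist_le_dist_of_mem (mem_range_self (ZT.q : ZT n H))).trans ?_
        have h1 : dist (S2.L (ZT.q : ZT n G)) (S2.R (ZT.q : ZT n H)) = ε := by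
          rw [glueMS_dist hyp]
          simp [gd, cb, cl, cbase, zb]
        rw [h1]; linarith
      | x k v =>
        obtain ⟨w0, hw0⟩ := exists_partner (X := G k) (Y := H k) v
        refine (infDist_le_dist_of_mem (mem_range_self (ZT.x k w0 : ZT n H))).trans ?_
        have h1 : dist (S2.L (ZT.x k v : ZT n G)) (S2.R (ZT.x k w0 : ZT n H)) =
            dist (optimalGHInjl (G k) (H k) v) (optimalGHInjr (G k) (H k) w0) + ε := by
          rw [glueMS_dist hyp]
          simp [gd, cb, cl, cbase, zb]
        rw [h1]
        have h2 : ghDist (G k) (H k) ≤ D := le_ciSup hbdd k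
        linarith
    · rintro u ⟨w, rfl⟩
      cases w with
      | p =>
        refine (infDist_le_dist_of_mem (mem_range_self (ZT.p : ZT n G))).trans ?_
        have h1 : dist (S2.R (ZT.p : ZT n H)) (S2.L (ZT.p : ZT n G)) = ε := by
          rw [glueMS_dist hyp]
          simp [gd, cb, cl, cbase, zb]
        rw [h1]; linarith
      | q =>
        refine (infDist_le_dist_of_mem (mem_range_self (ZT.q : ZT n G))).trans ?_
        have h1 : dist (S2.R (ZT.q : ZT n H)) (S2.L (ZT.q : ZT n G)) = ε := by
          rw [glueMS_dist hyp]
          simp [gd, cb, cl, cbase, zb]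
        rw [h1]; linarith
      | x k w =>
        obtain ⟨x0, hx0⟩ := exists_partner' (X := G k) (Y := H k) w
        refine (infDist_le_dist_of_mem (mem_range_self (ZT.x k x0 : ZT n G))).trans ?_
        have h1 : dist (S2.R (ZT.x k w : ZT n H)) (S2.L (ZT.x k x0 : ZT n G)) =
            dist (optimalGHInjl (G k) (H k) x0) (optimalGHInjr (G k) (H k) w) + ε := by
          rw [glueMS_dist hyp]
          simp [gd, cb, cl, cbase, zb]
        rw [h1]
        have h2 : ghDist (G k) (H k) ≤ D := le_ciSup hbdd k
        linarith
  have final : ghDist (ZT n G) (ZT n H) ≤ D + ε :=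
    le_trans (ghDist_le_hausdorffDist hisoL hisoR) key
  exact le_trans final (by linarith)

end Upper

section Lower

variable {n : ℕ} {G H : Fin n → Type u}
variable [∀ k, MetricSpace (G k)] [∀ k, CompactSpace (G k)] [∀ k, Nonempty (G k)]
variable [∀ k, MetricSpace (H k)] [∀ k, CompactSpace (H k)] [∀ k, Nonempty (H k)]
variable {r : ℝ}

/-- a canonical point in each block -/
noncomputable def zpick (j : ℕ) : ZT n G :=
  if hj : j - 1 < n ∧ 1 ≤ j then ZT.x ⟨j - 1, hj.1⟩ (Classical.arbitrary _)
  else if j = 0 then ZT.p else ZT.q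

theorem zb_zpick {j : ℕ} (hj : j ≤ n + 1) : zb (zpick j : ZT n G) = j := by
  unfold zpick
  by_cases h1 : j = 0
  · subst h1
    rw [dif_neg (by omega), if_pos rfl]
    rfl
  · by_cases h2 : j ≤ n
    · rw [dif_pos ⟨by omega, by omega⟩]
      simp only [zb]
      omega
    · rw [dif_neg (by omega), if_neg h1]
      simp only [zb]
      omega

theorem zGH_dist_ge (hr : 0 < r) (hn : 1 ≤ n) (hdG : ∀ k, diam (univ : Set (G k)) ≤ r)
    (hdH : ∀ k, diam (univ : Set (H k)) ≤ r) :
    (⨆ k : Fin n, ghDist (G k) (H k)) ≤ dist (zGH hr hn hdG) (zGH hr hn hdH) := by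
  haveI : Nonempty (Fin n) := ⟨⟨0, hn⟩⟩
  letI M1 := zMS (G := G) hr hn hdG
  letI M2 := zMS (G := H) hr hn hdH
  haveI := zcompact (G := G) hr hn hdG rfl
  haveI := zcompact (G := H) hr hn hdH rfl
  have hr1 : (1 : ℝ) ≤ n := by exact_mod_cast hn
  have h3rn : 3 * r ≤ 3 * r * n := by nlinarith
  set h : ℝ := ghDist (ZT n G) (ZT n H) with hhdef
  have hgoal : (⨆ k : Fin n, ghDist (G k) (H k)) ≤ h → (⨆ k : Fin n, ghDist (G k) (H k)) ≤
      dist (zGH hr hn hdG) (zGH hr hn hdH) := fun hx => hx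
  apply hgoal
  have hh0 : 0 ≤ h := dist_nonneg
  have hDr : (⨆ k : Fin n, ghDist (G k) (H k)) ≤ r / 2 :=
    ciSup_le fun k => ghDist_le_r hr.le (hdG k) (hdH k)
  have hh2 : h ≤ r / 2 := le_trans (zGH_dist_le hr hn hdG hdH) hDr
  -- the optimal coupling and nearest-point maps
  have hΦ := isometry_optimalGHInjl (ZT n G) (ZT n H)
  have hΨ := isometry_optimalGHInjr (ZT n G) (ZT n H)
  choose P hP using fun z : ZT n G => exists_partner (X := ZT n G) (Y := ZT n H) z
  choose Q hQ using fun w : ZT n H => exists_partner' (X := ZT n G) (Y := ZT n H) w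
  -- distortion bounds
  have dP : ∀ z z' : ZT n G, dist (P z) (P z') ≤ dist z z' + 2 * h := by
    intro z z'
    have t := dist_triangle4 (optimalGHInjr (ZT n G) (ZT n H) (P z)) (optimalGHInjl _ _ z)
      (optimalGHInjl _ _ z') (optimalGHInjr _ _ (P z'))
    rw [hΨ.dist_eq, hΦ.dist_eq] at t
    have c1 := hP z
    have c2 := hP z'
    rw [dist_comm (optimalGHInjr (ZT n G) (ZT n H) (P z)) (optimalGHInjl _ _ z)] at t
    linarith
  have dP' : ∀ z z' : ZT n G, dist z z' ≤ dist (P z) (P z') + 2 * h := by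
    intro z z'
    have t := dist_triangle4 (optimalGHInjl (ZT n G) (ZT n H) z) (optimalGHInjr _ _ (P z))
      (optimalGHInjr _ _ (P z')) (optimalGHInjl _ _ z')
    rw [hΨ.dist_eq, hΦ.dist_eq] at t
    have c1 := hP z
    have c2 := hP z'
    rw [dist_comm (optimalGHInjr (ZT n G) (ZT n H) (P z')) (optimalGHInjl _ _ z')] at t
    linarith
  have dQ : ∀ w w' : ZT n H, dist (Q w) (Q w') ≤ dist w w' + 2 * h := by
    intro w w'
    have t := dist_triangle4 (optimalGHInjl (ZT n G) (ZT n H) (Q w)) (optimalGHInjr _ _ w)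
      (optimalGHInjr _ _ w') (optimalGHInjl _ _ (Q w'))
    rw [hΨ.dist_eq, hΦ.dist_eq] at t
    have c1 := hQ w
    have c2 := hQ w'
    rw [dist_comm (optimalGHInjr (ZT n G) (ZT n H) w') (optimalGHInjl _ _ (Q w'))] at t
    linarith
  have dQ' : ∀ w w' : ZT n H, dist w w' ≤ dist (Q w) (Q w') + 2 * h := by
    intro w w'
    have t := dist_triangle4 (optimalGHInjr (ZT n G) (ZT n H) w) (optimalGHInjl _ _ (Q w))
      (optimalGHInjl _ _ (Q w')) (optimalGHInjr _ _ w')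
    rw [hΨ.dist_eq, hΦ.dist_eq] at t
    have c1 := hQ w
    have c2 := hQ w'
    rw [dist_comm (optimalGHInjr (ZT n G) (ZT n H) w) (optimalGHInjl _ _ (Q w))] at t
    linarith
  have dPQ : ∀ z : ZT n G, dist z (Q (P z)) ≤ 2 * h := by
    intro z
    have t := dist_triangle (optimalGHInjl (ZT n G) (ZT n H) z) (optimalGHInjr _ _ (P z))
      (optimalGHInjl _ _ (Q (P z)))
    rw [← hΦ.dist_eq z (Q (P z))]
    have c1 := hP z
    have c2 := hQ (P z)
    rw [dist_comm (optimalGHInjr (ZT n G) (ZT n H) (P z)) (optimalGHInjl _ _ (Q (P z)))] at t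
    linarith
  -- same-block criteria
  have same_G : ∀ z z' : ZT n G, dist z z' ≤ 2 * r → zb z = zb z' := by
    intro z z' hdist
    by_contra hne
    rw [zdist_diff hr hn hdG rfl hne] at hdist
    have := zc_ge hr hn (j := max (zb z) (zb z')) (by omega)
    nlinarith
  have same_H : ∀ w w' : ZT n H, dist w w' ≤ 2 * r → zb w = zb w' := by
    intro w w' hdist
    by_contra hne
    rw [zdist_diff hr hn hdH rfl hne] at hdist
    have := zc_ge hr hn (j := max (zb w) (zb w')) (by omega)
    nlinarith
  -- block maps
  have bP : ∀ z z' : ZT n G, zb z = zb z' → zb (P z) = zb (P z') := by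
    intro z z' hzz
    apply same_H
    have t1 := dP z z'
    have t2 := zdist_same hr hn hdG rfl hzz
    linarith
  have bQ : ∀ w w' : ZT n H, zb w = zb w' → zb (Q w) = zb (Q w') := by
    intro w w' hww
    apply same_G
    have t1 := dQ w w'
    have t2 := zdist_same hr hn hdH rfl hww
    linarith
  set σ : ℕ → ℕ := fun j => zb (P (zpick j)) with hσdef
  set τ : ℕ → ℕ := fun j => zb (Q (zpick j)) with hτdef
  have hσz : ∀ z : ZT n G, zb (P z) = σ (zb z) := fun z =>
    bP z (zpick (zb z)) (zb_zpick (zb_le z)).symm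
  have hτz : ∀ w : ZT n H, zb (Q w) = τ (zb w) := fun w =>
    bQ w (zpick (zb w)) (zb_zpick (zb_le w)).symm
  -- the combinatorial property for σ
  have hprop : ∀ i ≤ n + 1, ∀ j ≤ n + 1, i ≠ j → σ i ≠ σ j ∧ max (σ i) (σ j) = max i j := by
    intro i hi j hj hne
    have hbz : zb (zpick i : ZT n G) = i := zb_zpick hi
    have hbz' : zb (zpick j : ZT n G) = j := zb_zpick hj
    have hzz' : dist (zpick i : ZT n G) (zpick j) = zc r n (max i j) := by
      rw [zdist_diff hr hn hdG rfl (by rw [hbz, hbz']; exact hne), hbz, hbz']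
    have hge := zc_ge hr hn (j := max i j) (by omega)
    have hne' : σ i ≠ σ j := by
      intro heq
      have hle : dist (P (zpick i : ZT n G)) (P (zpick j)) ≤ r :=
        zdist_same hr hn hdH rfl heq
      have t := dP' (zpick i) (zpick j)
      rw [hzz'] at t
      nlinarith
    refine ⟨hne', ?_⟩
    have hPd : dist (P (zpick i : ZT n G)) (P (zpick j)) = zc r n (max (σ i) (σ j)) :=
      zdist_diff hr hn hdH rfl hne'
    have t1 := dP (zpick i : ZT n G) (zpick j)
    have t2 := dP' (zpick i : ZT n G) (zpick j)
    rw [hzz', hPd] at t1 t2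
    exact zc_close hr (abs_le.2 ⟨by linarith, by linarith⟩)
  have hτprop : ∀ i ≤ n + 1, ∀ j ≤ n + 1, i ≠ j → τ i ≠ τ j ∧ max (τ i) (τ j) = max i j := by
    intro i hi j hj hne
    have hbz : zb (zpick i : ZT n H) = i := zb_zpick hi
    have hbz' : zb (zpick j : ZT n H) = j := zb_zpick hj
    have hzz' : dist (zpick i : ZT n H) (zpick j) = zc r n (max i j) := by
      rw [zdist_diff hr hn hdH rfl (by rw [hbz, hbz']; exact hne), hbz, hbz']
    have hge := zc_ge hr hn (j := max i j) (by omega)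
    have hne' : τ i ≠ τ j := by
      intro heq
      have hle : dist (Q (zpick i : ZT n H)) (Q (zpick j)) ≤ r :=
        zdist_same hr hn hdG rfl heq
      have t := dQ' (zpick i) (zpick j)
      rw [hzz'] at t
      nlinarith
    refine ⟨hne', ?_⟩
    have hPd : dist (Q (zpick i : ZT n H)) (Q (zpick j)) = zc r n (max (τ i) (τ j)) :=
      zdist_diff hr hn hdG rfl hne'
    have t1 := dQ (zpick i : ZT n H) (zpick j)
    have t2 := dQ' (zpick i : ZT n H) (zpick j)
    rw [hzz', hPd] at t1 t2
    exact zc_close hr (abs_le.2 ⟨by linarith, by linarith⟩)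
  have hσmain := arith_main (n + 1) (by omega) σ hprop
  have hτmain := arith_main (n + 1) (by omega) τ hτprop
  have hτσ : ∀ j ≤ n + 1, τ (σ j) = j := by
    intro j hj
    have h1 : dist (zpick j : ZT n G) (Q (P (zpick j))) ≤ 2 * h := dPQ _
    have h3 : zb (zpick j : ZT n G) = zb (Q (P (zpick j))) :=
      same_G _ _ (by linarith)
    rw [zb_zpick hj, hτz (P (zpick j))] at h3
    exact h3.symm
  -- per-block estimate
  have key : ∀ k : Fin n, ghDist (G k) (H k) ≤ h := by
    intro k
    have hbk : zb (ZT.x k (Classical.arbitrary (G k)) : ZT n G) = k.val + 1 := rfl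
    by_cases hcase : σ (k.val + 1) = k.val + 1 ∧ τ (k.val + 1) = k.val + 1
    · obtain ⟨hσk, hτk⟩ := hcase
      have hiso1 : Isometry fun v : G k => optimalGHInjl (ZT n G) (ZT n H) (ZT.x k v) :=
        hΦ.comp (zx_isometry hr hn hdG rfl k)
      have hiso2 : Isometry fun w : H k => optimalGHInjr (ZT n G) (ZT n H) (ZT.x k w) :=
        hΨ.comp (zx_isometry hr hn hdH rfl k)
      have hH : hausdorffDist (range fun v : G k => optimalGHInjl (ZT n G) (ZT n H) (ZT.x k v))
          (range fun w : H k => optimalGHInjr (ZT n G) (ZT n H) (ZT.x k w)) ≤ h := by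
        apply hausdorffDist_le_of_infDist hh0
        · rintro u ⟨v, rfl⟩
          have hb1 : zb (P (ZT.x k v)) = k.val + 1 := by
            rw [hσz (ZT.x k v)]
            exact hσk
          obtain ⟨w, hw⟩ := zb_eq_x hb1
          refine (infDist_le_dist_of_mem (mem_range_self w)).trans ?_
          have : optimalGHInjr (ZT n G) (ZT n H) (ZT.x k w) =
              optimalGHInjr (ZT n G) (ZT n H) (P (ZT.x k v)) := by rw [hw]
          rw [this]
          exact hP _
        · rintro u ⟨w, rfl⟩
          have hb1 : zb (Q (ZT.x k w)) = k.val + 1 := by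
            rw [hτz (ZT.x k w)]
            exact hτk
          obtain ⟨v, hv⟩ := zb_eq_x hb1
          refine (infDist_le_dist_of_mem (mem_range_self v)).trans ?_
          have he : optimalGHInjl (ZT n G) (ZT n H) (ZT.x k v) =
              optimalGHInjl (ZT n G) (ZT n H) (Q (ZT.x k w)) := by rw [hv]
          rw [dist_comm, he]
          exact hQ _
      exact le_trans (ghDist_le_hausdorffDist hiso1 hiso2) hH
    · -- swapped case: necessarily k.val + 1 = 1 and σ 1 = τ 1 = 0
      have hkn := k.isLt
      have hk1 : k.val + 1 = 1 := by
        by_contra hne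
        exact hcase ⟨hσmain.1 _ (by omega) (by omega), hτmain.1 _ (by omega) (by omega)⟩
      have hστ1 : τ (σ 1) = 1 := hτσ 1 (by omega)
      have hboth0 : σ 1 = 0 ∧ τ 1 = 0 := by
        have hσ1 : σ 1 = 0 ∨ σ 1 = 1 := by have := hσmain.2; omega
        have hτ1 : τ 1 = 0 ∨ τ 1 = 1 := by have := hτmain.2; omega
        rcases hσ1 with h0 | h1
        · rcases hτ1 with t0 | t1
          · exact ⟨h0, t0⟩
          · exfalso
            rw [h0] at hστ1
            have hne01 := (hτprop 0 (by omega) 1 (by omega) (by omega)).1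
            rw [hστ1, t1] at hne01
            exact hne01 rfl
        · exfalso
          rw [h1] at hστ1
          exact hcase ⟨by rw [hk1, h1], by rw [hk1, hστ1]⟩
      obtain ⟨hσ10, hτ10⟩ := hboth0
      have hzbx : ∀ v : G k, zb (ZT.x k v : ZT n G) = 1 := by
        intro v
        show k.val + 1 = 1
        exact hk1
      have hzby : ∀ w : H k, zb (ZT.x k w : ZT n H) = 1 := by
        intro w
        show k.val + 1 = 1
        exact hk1
      have hdiamG : diam (univ : Set (G k)) ≤ 2 * h := by
        apply diam_le_of_forall_dist_le (by linarith)
        intro v _ v' _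
        have e1 : P (ZT.x k v) = ZT.p := by
          apply zb_eq_zero
          rw [hσz (ZT.x k v), hzbx v]
          exact hσ10
        have e2 : P (ZT.x k v') = ZT.p := by
          apply zb_eq_zero
          rw [hσz (ZT.x k v'), hzbx v']
          exact hσ10
        have t1 := hP (ZT.x k v)
        have t2 := hP (ZT.x k v')
        rw [e1] at t1
        rw [e2] at t2
        have tt := dist_triangle (optimalGHInjl (ZT n G) (ZT n H) (ZT.x k v))
          (optimalGHInjr (ZT n G) (ZT n H) ZT.p) (optimalGHInjl (ZT n G) (ZT n H) (ZT.x k v'))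
        rw [dist_comm (optimalGHInjr (ZT n G) (ZT n H) ZT.p)
          (optimalGHInjl (ZT n G) (ZT n H) (ZT.x k v'))] at tt
        have hzz : dist v v' = dist (optimalGHInjl (ZT n G) (ZT n H) (ZT.x k v))
            (optimalGHInjl (ZT n G) (ZT n H) (ZT.x k v')) := by
          rw [hΦ.dist_eq, zdist_xx hr hn hdG rfl k v v']
        rw [hzz]
        linarith
      have hdiamH : diam (univ : Set (H k)) ≤ 2 * h := by
        apply diam_le_of_forall_dist_le (by linarith)
        intro w _ w' _
        have e1 : Q (ZT.x k w) = ZT.p := by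
          apply zb_eq_zero
          rw [hτz (ZT.x k w), hzby w]
          exact hτ10
        have e2 : Q (ZT.x k w') = ZT.p := by
          apply zb_eq_zero
          rw [hτz (ZT.x k w'), hzby w']
          exact hτ10
        have t1 := hQ (ZT.x k w)
        have t2 := hQ (ZT.x k w')
        rw [e1] at t1
        rw [e2] at t2
        have tt := dist_triangle (optimalGHInjr (ZT n G) (ZT n H) (ZT.x k w))
          (optimalGHInjl (ZT n G) (ZT n H) ZT.p) (optimalGHInjr (ZT n G) (ZT n H) (ZT.x k w'))
        rw [dist_comm (optimalGHInjr (ZT n G) (ZT n H) (ZT.x k w))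
          (optimalGHInjl (ZT n G) (ZT n H) ZT.p)] at tt
        have hzz : dist w w' = dist (optimalGHInjr (ZT n G) (ZT n H) (ZT.x k w))
            (optimalGHInjr (ZT n G) (ZT n H) (ZT.x k w')) := by
          rw [hΨ.dist_eq, zdist_xx hr hn hdH rfl k w w']
        rw [hzz]
        linarith
      have := ghDist_le_r (r := 2 * h) (by linarith) hdiamG hdiamH
      linarith
  exact ciSup_le key

end Lower

end LinftyAux

/-- For `r > 0` and `n ≥ 1`, there is a map `S` from the `n`-fold
cartesian power of `M_{≤ r} = {Z ∈ M : diam Z ≤ r}` into `B(5rn) = {Z ∈ M : diam Z = 5rn}`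
realizing the `ℓ^∞` (maximum) product distance: for all tuples `X, Y`,
`d_GH(S X, S Y) = max_k d_GH(X_k, Y_k)`. -/
theorem linfty_power_embeds_into_sphere (r : ℝ) (hr : 0 < r) (n : ℕ) (hn : 1 ≤ n) :
    ∃ S : (Fin n → {Z : GHSpace // Metric.diam (Set.univ : Set Z.Rep) ≤ r}) →
        {Z : GHSpace // Metric.diam (Set.univ : Set Z.Rep) = 5 * r * n},
      ∀ X Y : Fin n → {Z : GHSpace // Metric.diam (Set.univ : Set Z.Rep) ≤ r},
        dist (S X : GHSpace) (S Y : GHSpace) =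
          ⨆ k : Fin n, dist (X k : GHSpace) (Y k : GHSpace) := by
  refine ⟨fun X => ⟨LinftyAux.zGH hr hn (fun k => (X k).2),
    LinftyAux.zGH_diam hr hn (fun k => (X k).2)⟩, ?_⟩
  intro X Y
  have heq : dist (LinftyAux.zGH hr hn (fun k => (X k).2))
      (LinftyAux.zGH hr hn (fun k => (Y k).2)) =
      ⨆ k : Fin n, ghDist ((X k) : GHSpace).Rep ((Y k) : GHSpace).Rep :=
    le_antisymm (LinftyAux.zGH_dist_le hr hn _ _) (LinftyAux.zGH_dist_ge hr hn _ _)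
  show dist (LinftyAux.zGH hr hn (fun k => (X k).2))
      (LinftyAux.zGH hr hn (fun k => (Y k).2)) = _
  rw [heq]
  exact iSup_congr fun k => (dist_ghDist _ _).symm
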